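/- Let $h > 0$, let $E \subset \{x_1 = 0\} \cap B_R(0) \subset \mathbb{R}^n$ be a convex set of dimension $k$ with $k$-dimensional Hausdorff measure $m > 0$ and mass center $0$, and let $c > 0$. Then the convex hull $\operatorname{conv}(E \cup c B_h(0))$ has $n$-dimensional Lebesgue measure at least $C(n, k, c) \, m \, h^{n-k}$, and its intersection with $\{x_1 > 0\}$ has measure at least $\frac{1}{2} C(n,k,c) \, m \, h^{n-k}$. -/

import Mathlib

open MeasureTheory
open scoped ENNReal

open MeasureTheory Module Set
open scoped Pointwise ENNReal NNReal

lemma exists_adapted_basis {n : ℕ} (k : ℕ) (V : Submodule ℝ (EuclideanSpace ℝ (Fin n)))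
    (hV : finrank ℝ V = k) (hV' : finrank ℝ Vᗮ = n - k) :
    ∃ B : OrthonormalBasis (Fin k ⊕ Fin (n - k)) ℝ (EuclideanSpace ℝ (Fin n)),
      (∀ i, B (Sum.inl i) ∈ V) ∧ ∀ j, B (Sum.inr j) ∈ Vᗮ := by
  classical
  let b₁ := (stdOrthonormalBasis ℝ V).reindex (finCongr hV)
  let b₂ := (stdOrthonormalBasis ℝ Vᗮ).reindex (finCongr hV')
  set v : Fin k ⊕ Fin (n - k) → EuclideanSpace ℝ (Fin n) :=
    Sum.elim (fun i => (b₁ i : EuclideanSpace ℝ (Fin n)))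
      (fun j => (b₂ j : EuclideanSpace ℝ (Fin n))) with hv
  have hon : Orthonormal ℝ v := by
    rw [orthonormal_iff_ite]
    rintro (i | i) (j | j)
    · have := (orthonormal_iff_ite.1 b₁.orthonormal) i j
      simpa [v, Submodule.coe_inner] using this
    · simp only [v, Sum.elim_inl, Sum.elim_inr]
      rw [Submodule.inner_right_of_mem_orthogonal (b₁ i).2 (b₂ j).2]
      simp
    · simp only [v, Sum.elim_inl, Sum.elim_inr]
      rw [real_inner_comm, Submodule.inner_right_of_mem_orthogonal (b₁ j).2 (b₂ i).2]
      simp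
    · have := (orthonormal_iff_ite.1 b₂.orthonormal) i j
      simpa [v, Submodule.coe_inner] using this
  have hspan : ⊤ ≤ Submodule.span ℝ (range v) := by
    rw [hv, Sum.elim_range]
    rw [Submodule.span_union]
    have h1 : Submodule.span ℝ (range fun i => (b₁ i : EuclideanSpace ℝ (Fin n))) = V := by
      have : (range fun i => (b₁ i : EuclideanSpace ℝ (Fin n))) = V.subtype '' range b₁ := by
        rw [← Set.range_comp]; rfl
      rw [this, ← Submodule.map_span, ← b₁.coe_toBasis, b₁.toBasis.span_eq,
        Submodule.map_top, Submodule.range_subtype]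
    have h2 : Submodule.span ℝ (range fun j => (b₂ j : EuclideanSpace ℝ (Fin n))) = Vᗮ := by
      have : (range fun j => (b₂ j : EuclideanSpace ℝ (Fin n))) = Vᗮ.subtype '' range b₂ := by
        rw [← Set.range_comp]; rfl
      rw [this, ← Submodule.map_span, ← b₂.coe_toBasis, b₂.toBasis.span_eq,
        Submodule.map_top, Submodule.range_subtype]
    rw [h1, h2, Submodule.sup_orthogonal_of_hasOrthogonalProjection]
  refine ⟨OrthonormalBasis.mk hon hspan, fun i => ?_, fun j => ?_⟩
  · rw [OrthonormalBasis.coe_mk]; exact (b₁ i).2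
  · rw [OrthonormalBasis.coe_mk]; exact (b₂ j).2

lemma core_estimate {n : ℕ} (k : ℕ) (hkn : k < n) (V : Submodule ℝ (EuclideanSpace ℝ (Fin n)))
    (hVk : finrank ℝ V = k) (A : Set (EuclideanSpace ℝ (Fin n))) (hA : Convex ℝ A)
    (hAV : A ⊆ (V : Set (EuclideanSpace ℝ (Fin n)))) (ρ : ℝ) (hρ : 0 < ρ) :
    μH[(k : ℝ)] A * ENNReal.ofReal ((2 * (ρ / (n + 1))) ^ (n - k)) ≤
      ENNReal.ofReal (Real.sqrt k ^ k) * volume (A + Metric.ball (0 : EuclideanSpace ℝ (Fin n)) ρ) := by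
  classical
  have hV' : finrank ℝ Vᗮ = n - k := by
    have h := V.finrank_add_finrank_orthogonal
    rw [hVk, finrank_euclideanSpace_fin] at h
    omega
  obtain ⟨B, hB1, hB2⟩ := exists_adapted_basis k V hVk hV'
  set ι := (Fin k ⊕ Fin (n - k)) with hι
  let e₂ := (MeasurableEquiv.toLp 2 (ι → ℝ)).symm
  let e₃ := MeasurableEquiv.sumPiEquivProdPi (fun _ : ι => ℝ)
  set g : EuclideanSpace ℝ (Fin n) → (Fin k → ℝ) × (Fin (n - k) → ℝ) :=
    fun x => e₃ (e₂ (B.repr x)) with hgdef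
  set gs : (Fin k → ℝ) × (Fin (n - k) → ℝ) → EuclideanSpace ℝ (Fin n) :=
    fun p => B.repr.symm (e₂.symm (e₃.symm p)) with hgsdef
  have hg : MeasurePreserving g volume volume := by
    have h3 : MeasurePreserving (⇑e₃) volume volume := by
      have h := measurePreserving_sumPiEquivProdPi (fun _ : ι => (volume : Measure ℝ))
      rw [show ((volume : Measure (ι → ℝ))) = Measure.pi fun _ => volume from MeasureTheory.volume_pi,
        Measure.volume_eq_prod,
        show ((volume : Measure (Fin k → ℝ))) = Measure.pi fun _ => volume from MeasureTheory.volume_pi,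
        show ((volume : Measure (Fin (n-k) → ℝ))) = Measure.pi fun _ => volume from
          MeasureTheory.volume_pi]
      exact h
    exact h3.comp ((EuclideanSpace.volume_preserving_symm_measurableEquiv_toLp ι).comp
      B.measurePreserving_repr)
  have hginv : ∀ x, gs (g x) = x := by
    intro x; simp [hgdef, hgsdef]
  have hginv' : ∀ p, g (gs p) = p := by
    intro p; simp [hgdef, hgsdef]
  have hg1 : ∀ x i, (g x).1 i = B.repr x (Sum.inl i) := fun _ _ => rfl
  have hg2 : ∀ x j, (g x).2 j = B.repr x (Sum.inr j) := fun _ _ => rfl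
  have hgadd : ∀ x y, g (x + y) = g x + g y := by
    intro x y
    refine Prod.ext ?_ ?_ <;> funext i <;>
      · show B.repr (x + y) _ = B.repr x _ + B.repr y _
        rw [map_add]; rfl
  have hgsmul : ∀ (r : ℝ) x, g (r • x) = r • g x := by
    intro r x
    refine Prod.ext ?_ ?_ <;> funext i <;>
      · show B.repr (r • x) _ = r * B.repr x _
        rw [LinearIsometryEquiv.map_smul]; rfl
  have hgsadd : ∀ p q, gs (p + q) = gs p + gs q := by
    intro p q
    have : g (gs p + gs q) = p + q := by rw [hgadd, hginv', hginv']
    have h2 := congrArg gs this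
    rw [hginv] at h2; exact h2.symm
  -- norm formula for gs
  have hnorm : ∀ p, ‖gs p‖ = Real.sqrt (∑ i, p.1 i ^ 2 + ∑ j, p.2 j ^ 2) := by
    intro p
    have h1 : ‖gs p‖ = ‖e₂.symm (e₃.symm p)‖ := by
      rw [hgsdef]; exact B.repr.symm.norm_map _
    rw [h1, EuclideanSpace.norm_eq, Fintype.sum_sum_type]
    congr 1
    congr 1
    · exact Finset.sum_congr rfl fun i _ => by
        rw [Real.norm_eq_abs, sq_abs]; rfl
    · exact Finset.sum_congr rfl fun j _ => by
        rw [Real.norm_eq_abs, sq_abs]; rfl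
  set A' : Set (Fin k → ℝ) := (fun x => (g x).1) '' A with hA'def
  have hA2 : ∀ x ∈ A, (g x).2 = 0 := by
    intro x hx; funext j
    rw [hg2, B.repr_apply_apply, real_inner_comm,
      Submodule.inner_right_of_mem_orthogonal (hAV hx) (hB2 j)]
    rfl
  have hxrep : ∀ x ∈ A, gs ((g x).1, 0) = x := by
    intro x hx
    have h5 : ((g x).1, (0 : Fin (n - k) → ℝ)) = g x := Prod.ext rfl (hA2 x hx).symm
    rw [h5, hginv]
  set L : (Fin k → ℝ) → EuclideanSpace ℝ (Fin n) := fun u => gs (u, 0) with hLdef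
  have hLadd : ∀ u v, L (u + v) = L u + L v := by
    intro u v
    have h5 : ((u + v : Fin k → ℝ), (0 : Fin (n - k) → ℝ)) = (u, (0 : Fin (n - k) → ℝ)) + (v, 0) := by
      rw [Prod.mk_add_mk, add_zero]
    show gs _ = gs _ + gs _
    rw [h5, hgsadd]
  have hLnorm : ∀ u, ‖L u‖ ≤ Real.sqrt k * ‖u‖ := by
    intro u
    show ‖gs (u, 0)‖ ≤ _
    rw [hnorm]
    have h0 : ∑ j : Fin (n - k), ((0 : Fin (n - k) → ℝ) j) ^ 2 = 0 := by simp
    simp only [h0, add_zero]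
    have hb : ∑ i, u i ^ 2 ≤ (k : ℝ) * ‖u‖ ^ 2 := by
      calc ∑ i, u i ^ 2 ≤ ∑ _i : Fin k, ‖u‖ ^ 2 := by
            refine Finset.sum_le_sum fun i _ => ?_
            have h1 : ‖u i‖ ≤ ‖u‖ := norm_le_pi_norm u i
            calc u i ^ 2 = ‖u i‖ ^ 2 := by rw [Real.norm_eq_abs, sq_abs]
              _ ≤ ‖u‖ ^ 2 := by gcongr
        _ = (k : ℝ) * ‖u‖ ^ 2 := by
            rw [Finset.sum_const, Finset.card_univ, Fintype.card_fin, nsmul_eq_mul]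
    calc Real.sqrt (∑ i, u i ^ 2) ≤ Real.sqrt ((k : ℝ) * ‖u‖ ^ 2) := Real.sqrt_le_sqrt hb
      _ = Real.sqrt k * ‖u‖ := by
          rw [Real.sqrt_mul (by positivity), Real.sqrt_sq (norm_nonneg _)]
  have hLlip : LipschitzWith (Real.toNNReal (Real.sqrt k)) L := by
    apply LipschitzWith.of_dist_le_mul
    intro u v
    have hsub : L u - L v = L (u - v) := by
      have h6 := hLadd v (u - v)
      rw [add_sub_cancel] at h6
      rw [h6, add_sub_cancel_left]
    rw [dist_eq_norm, dist_eq_norm, hsub]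
    calc ‖L (u - v)‖ ≤ Real.sqrt k * ‖u - v‖ := hLnorm _
      _ = (Real.toNNReal (Real.sqrt k) : ℝ) * ‖u - v‖ := by
          rw [Real.coe_toNNReal _ (Real.sqrt_nonneg _)]
  have hALA' : A ⊆ L '' A' := fun x hx => ⟨(g x).1, ⟨x, hx, rfl⟩, hxrep x hx⟩
  have hμHA' : μH[(k : ℝ)] A ≤ ENNReal.ofReal (Real.sqrt k ^ k) * volume A' := by
    have h1 : μH[(k : ℝ)] A ≤ μH[(k : ℝ)] (L '' A') := measure_mono hALA'
    have h2 := hLlip.hausdorffMeasure_image_le (by positivity : (0 : ℝ) ≤ (k : ℝ)) A'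
    have h3 : (μH[(k : ℝ)] : Measure (Fin k → ℝ)) = volume := by
      have h7 := hausdorffMeasure_pi_real (ι := Fin k)
      rwa [Fintype.card_fin] at h7
    have h4 : ((Real.toNNReal (Real.sqrt k) : ℝ≥0∞)) ^ ((k : ℕ) : ℝ)
        = ENNReal.ofReal (Real.sqrt k ^ k) := by
      rw [ENNReal.rpow_natCast, ← ENNReal.coe_pow]
      rw [ENNReal.ofReal, Real.toNNReal_pow (Real.sqrt_nonneg _)]
    calc μH[(k : ℝ)] A ≤ μH[(k : ℝ)] (L '' A') := h1
      _ ≤ ((Real.toNNReal (Real.sqrt k) : ℝ≥0∞)) ^ ((k : ℕ) : ℝ) * μH[(k : ℝ)] A' := h2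
      _ = ENNReal.ofReal (Real.sqrt k ^ k) * volume A' := by rw [h4, h3]
  set r := ρ / (n + 1) with hrdef
  have hr : 0 < r := by positivity
  set P : Set ((Fin k → ℝ) × (Fin (n - k) → ℝ)) := A' ×ˢ Metric.ball 0 r with hPdef
  have hPsub : g ⁻¹' P ⊆ A + Metric.ball (0 : EuclideanSpace ℝ (Fin n)) ρ := by
    intro x hxP
    obtain ⟨⟨x₀, hx₀, hfst⟩, hsnd⟩ := hxP
    have hv : ‖(g x).2‖ < r := by rwa [← mem_ball_zero_iff]
    have hy : ‖gs (0, (g x).2)‖ < ρ := by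
      rw [hnorm]
      have h0 : ∑ i : Fin k, ((0 : Fin k → ℝ) i) ^ 2 = 0 := by simp
      simp only [h0, zero_add]
      have hb : ∑ j, (g x).2 j ^ 2 ≤ ((n - k : ℕ) : ℝ) * ‖(g x).2‖ ^ 2 := by
        calc ∑ j, (g x).2 j ^ 2 ≤ ∑ _j : Fin (n - k), ‖(g x).2‖ ^ 2 := by
              refine Finset.sum_le_sum fun j _ => ?_
              have h1 : ‖(g x).2 j‖ ≤ ‖(g x).2‖ := norm_le_pi_norm _ j
              calc (g x).2 j ^ 2 = ‖(g x).2 j‖ ^ 2 := by rw [Real.norm_eq_abs, sq_abs]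
                _ ≤ ‖(g x).2‖ ^ 2 := by gcongr
          _ = ((n - k : ℕ) : ℝ) * ‖(g x).2‖ ^ 2 := by
              rw [Finset.sum_const, Finset.card_univ, Fintype.card_fin, nsmul_eq_mul]
      have hsq : Real.sqrt ((n - k : ℕ) : ℝ) ≤ (n : ℝ) + 1 := by
        have h8 : ((n - k : ℕ) : ℝ) ≤ ((n : ℝ) + 1) ^ 2 := by
          have h9 : ((n - k : ℕ) : ℝ) ≤ (n : ℝ) := by exact_mod_cast Nat.sub_le n k
          nlinarith [Nat.cast_nonneg (α := ℝ) n]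
        calc Real.sqrt ((n - k : ℕ) : ℝ) ≤ Real.sqrt (((n : ℝ) + 1) ^ 2) := Real.sqrt_le_sqrt h8
          _ = (n : ℝ) + 1 := Real.sqrt_sq (by positivity)
      calc Real.sqrt (∑ j, (g x).2 j ^ 2)
          ≤ Real.sqrt (((n - k : ℕ) : ℝ) * ‖(g x).2‖ ^ 2) := Real.sqrt_le_sqrt hb
        _ = Real.sqrt ((n - k : ℕ) : ℝ) * ‖(g x).2‖ := by
            rw [Real.sqrt_mul (by positivity), Real.sqrt_sq (norm_nonneg _)]
        _ ≤ ((n : ℝ) + 1) * ‖(g x).2‖ := by gcongr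
        _ < ((n : ℝ) + 1) * r := by
            have : (0 : ℝ) < (n : ℝ) + 1 := by positivity
            exact mul_lt_mul_of_pos_left hv this
        _ = ρ := by rw [hrdef]; field_simp
    have hxeq : x = x₀ + gs (0, (g x).2) := by
      have h5 : g x = ((g x₀).1, (0 : Fin (n - k) → ℝ)) + ((0 : Fin k → ℝ), (g x).2) := by
        refine Prod.ext ?_ ?_
        · show (g x).1 = (g x₀).1 + 0
          rw [add_zero]; exact hfst.symm
        · show (g x).2 = 0 + (g x).2
          rw [zero_add]
      have h6 := congrArg gs h5
      rw [hginv x, hgsadd, hxrep x₀ hx₀] at h6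
      exact h6
    rw [hxeq]
    exact Set.add_mem_add hx₀ (mem_ball_zero_iff.2 hy)
  have hA'conv : Convex ℝ A' := by
    refine Convex.is_linear_image hA ⟨fun x y => ?_, fun c x => ?_⟩
    · rw [hgadd]; rfl
    · rw [hgsmul]; rfl
  have hPnull : NullMeasurableSet P volume :=
    (hA'conv.nullMeasurableSet volume).prod measurableSet_ball.nullMeasurableSet
  have hvolP : volume P = volume A' * ENNReal.ofReal ((2 * r) ^ (n - k)) := by
    rw [hPdef, Measure.volume_eq_prod, Measure.prod_prod]
    congr 1
    rw [Real.volume_pi_ball _ hr, Fintype.card_fin]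
  calc μH[(k : ℝ)] A * ENNReal.ofReal ((2 * (ρ / (n + 1))) ^ (n - k))
      ≤ (ENNReal.ofReal (Real.sqrt k ^ k) * volume A') *
          ENNReal.ofReal ((2 * (ρ / (n + 1))) ^ (n - k)) := mul_le_mul_left hμHA' _
    _ = ENNReal.ofReal (Real.sqrt k ^ k) *
          (volume A' * ENNReal.ofReal ((2 * r) ^ (n - k))) := by rw [mul_assoc]
    _ = ENNReal.ofReal (Real.sqrt k ^ k) * volume P := by rw [hvolP]
    _ = ENNReal.ofReal (Real.sqrt k ^ k) * volume (g ⁻¹' P) := by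
        rw [hg.measure_preimage hPnull]
    _ ≤ ENNReal.ofReal (Real.sqrt k ^ k) *
          volume (A + Metric.ball (0 : EuclideanSpace ℝ (Fin n)) ρ) :=
        mul_le_mul_right (measure_mono hPsub) _
/-- Volume lower bound for the convex hull of a `k`-dimensional convex set `E ⊆ {x₁ = 0}`
with mass center `0` and a small ball `B_{ch}(0)`. -/
theorem volume_convexHull_lower_bound (n k : ℕ) (hn : 0 < n) (hkn : k < n) (c : ℝ) (hc : 0 < c) :
    ∃ C : ℝ, 0 < C ∧ ∀ (R h m : ℝ) (E : Set (EuclideanSpace ℝ (Fin n))),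
      0 < R → 0 < h → 0 < m → Convex ℝ E →
      E ⊆ {x : EuclideanSpace ℝ (Fin n) | x ⟨0, hn⟩ = 0} ∩ Metric.ball 0 R →
      Module.finrank ℝ (vectorSpan ℝ E) = k →
      (μH[(k : ℝ)] E).toReal = m →
      (∫ x, x ∂((μH[(k : ℝ)]).restrict E)) = (0 : EuclideanSpace ℝ (Fin n)) →
      ENNReal.ofReal (C * m * h ^ (n - k)) ≤
          volume (convexHull ℝ (E ∪ Metric.ball (0 : EuclideanSpace ℝ (Fin n)) (c * h))) ∧
        ENNReal.ofReal (C / 2 * m * h ^ (n - k)) ≤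
          volume (convexHull ℝ (E ∪ Metric.ball (0 : EuclideanSpace ℝ (Fin n)) (c * h)) ∩
            {x : EuclideanSpace ℝ (Fin n) | 0 < x ⟨0, hn⟩}) := by
  classical
  have hsk : (0 : ℝ) < Real.sqrt k ^ k := by
    rcases Nat.eq_zero_or_pos k with hk0 | hk0
    · simp [hk0]
    · exact pow_pos (Real.sqrt_pos.2 (by exact_mod_cast hk0)) k
  set C : ℝ := (1 / 2 : ℝ) ^ n * ((2 * c / (n + 1)) ^ (n - k) / Real.sqrt k ^ k) with hCdef
  have hCpos : 0 < C := by
    apply mul_pos (by positivity)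
    exact div_pos (by positivity) hsk
  refine ⟨C, hCpos, ?_⟩
  intro R h m E hR hh hm hconv hE hrank hmeas _hcenter
  set i₀ : Fin n := ⟨0, hn⟩ with hi₀
  set ρ := c * h with hρdef
  have hρ : 0 < ρ := by positivity
  set K := convexHull ℝ (E ∪ Metric.ball (0 : EuclideanSpace ℝ (Fin n)) ρ) with hKdef
  -- basic facts about E
  have hμE : μH[(k : ℝ)] E = ENNReal.ofReal m := by
    have hne : μH[(k : ℝ)] E ≠ ∞ := by
      intro h'
      rw [h'] at hmeas
      simp only [ENNReal.toReal_top] at hmeas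
      linarith
    rw [← hmeas, ENNReal.ofReal_toReal hne]
  have hEne : E.Nonempty := by
    rcases E.eq_empty_or_nonempty with hE0 | hE0
    · rw [hE0] at hmeas; simp at hmeas; linarith
    · exact hE0
  obtain ⟨a, ha⟩ := hEne
  set V := vectorSpan ℝ E with hVdef
  set E₀ : Set (EuclideanSpace ℝ (Fin n)) := (fun x => x - a) '' E with hE₀def
  have hE₀V : E₀ ⊆ (V : Set (EuclideanSpace ℝ (Fin n))) := by
    rintro _ ⟨x, hx, rfl⟩
    simpa [vsub_eq_sub] using vsub_mem_vectorSpan ℝ hx ha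
  have hE₀conv : Convex ℝ E₀ := by
    have hfun : (fun x : EuclideanSpace ℝ (Fin n) => x - a) = fun x => -a + x := by
      funext x; rw [neg_add_eq_sub]
    rw [hE₀def, hfun]
    exact hconv.translate (-a)
  have hμE₀ : μH[(k : ℝ)] E₀ = ENNReal.ofReal m := by
    have hiso : Isometry (fun x : EuclideanSpace ℝ (Fin n) => x - a) :=
      Isometry.of_dist_eq fun x y => dist_sub_right x y a
    rw [hE₀def, hiso.hausdorffMeasure_image (Or.inl (by positivity)) E, hμE]
  -- core estimate
  have hcore := core_estimate k hkn V hrank E₀ hE₀conv hE₀V ρ hρ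
  rw [hμE₀] at hcore
  -- translation invariance
  have hset : E₀ + Metric.ball (0 : EuclideanSpace ℝ (Fin n)) ρ =
      (fun y => y + a) ⁻¹' (E + Metric.ball (0 : EuclideanSpace ℝ (Fin n)) ρ) := by
    ext x
    simp only [Set.mem_preimage, Set.mem_add, hE₀def, Set.mem_image]
    constructor
    · rintro ⟨_, ⟨e, he, rfl⟩, b, hb, rfl⟩
      exact ⟨e, he, b, hb, by abel⟩
    · rintro ⟨e, he, b, hb, hq⟩
      exact ⟨e - a, ⟨e, he, rfl⟩, b, hb, by
        rw [sub_add_eq_add_sub, hq, add_sub_cancel_right]⟩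
  have htransvol : volume (E₀ + Metric.ball (0 : EuclideanSpace ℝ (Fin n)) ρ) =
      volume (E + Metric.ball (0 : EuclideanSpace ℝ (Fin n)) ρ) := by
    rw [hset, measure_preimage_add_right volume a _]
  rw [htransvol] at hcore
  -- half scaling
  have hhalf : (1 / 2 : ℝ) • (E + Metric.ball (0 : EuclideanSpace ℝ (Fin n)) ρ) ⊆ K := by
    rintro _ ⟨y, hy, rfl⟩
    obtain ⟨e, he, b, hb, rfl⟩ := hy
    have he' : e ∈ K := subset_convexHull ℝ _ (Or.inl he)
    have hb' : b ∈ K := subset_convexHull ℝ _ (Or.inr hb)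
    have hcomb := (convex_convexHull ℝ (E ∪ Metric.ball (0 : EuclideanSpace ℝ (Fin n)) ρ)) he' hb'
      (by norm_num : (0:ℝ) ≤ 1/2) (by norm_num : (0:ℝ) ≤ 1/2) (by norm_num)
    show (1 / 2 : ℝ) • (e + b) ∈ K
    rw [smul_add]
    exact hcomb
  have hvolhalf : volume ((1 / 2 : ℝ) • (E + Metric.ball (0 : EuclideanSpace ℝ (Fin n)) ρ)) =
      ENNReal.ofReal ((1 / 2 : ℝ) ^ n) *
        volume (E + Metric.ball (0 : EuclideanSpace ℝ (Fin n)) ρ) := by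
    rw [Measure.addHaar_smul_of_nonneg volume (by norm_num) _, finrank_euclideanSpace_fin]
  -- part 1
  set Y := ENNReal.ofReal (Real.sqrt k ^ k) with hYdef
  have hYne0 : Y ≠ 0 := by
    rw [hYdef, Ne, ENNReal.ofReal_eq_zero, not_le]; exact hsk
  have hYfin : Y ≠ ∞ := ENNReal.ofReal_ne_top
  have hprod : ENNReal.ofReal (C * m * h ^ (n - k)) * Y =
      ENNReal.ofReal ((1 / 2 : ℝ) ^ n) *
        (ENNReal.ofReal m * ENNReal.ofReal ((2 * (ρ / (n + 1))) ^ (n - k))) := by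
    rw [hYdef, ← ENNReal.ofReal_mul (by positivity), ← ENNReal.ofReal_mul (by positivity),
      ← ENNReal.ofReal_mul (by positivity)]
    congr 1
    rw [hCdef, hρdef]
    field_simp
    ring
  have hfirst : ENNReal.ofReal (C * m * h ^ (n - k)) ≤ volume K := by
    have hchain : ENNReal.ofReal (C * m * h ^ (n - k)) * Y ≤ volume K * Y := by
      calc ENNReal.ofReal (C * m * h ^ (n - k)) * Y
          = ENNReal.ofReal ((1 / 2 : ℝ) ^ n) *
              (ENNReal.ofReal m * ENNReal.ofReal ((2 * (ρ / (n + 1))) ^ (n - k))) := hprod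
        _ ≤ ENNReal.ofReal ((1 / 2 : ℝ) ^ n) *
              (Y * volume (E + Metric.ball (0 : EuclideanSpace ℝ (Fin n)) ρ)) :=
            mul_le_mul_right hcore _
        _ = (ENNReal.ofReal ((1 / 2 : ℝ) ^ n) *
              volume (E + Metric.ball (0 : EuclideanSpace ℝ (Fin n)) ρ)) * Y := by ring
        _ = volume ((1 / 2 : ℝ) • (E + Metric.ball (0 : EuclideanSpace ℝ (Fin n)) ρ)) * Y := by
            rw [hvolhalf]
        _ ≤ volume K * Y := mul_le_mul_left (measure_mono hhalf) _
    exact (ENNReal.mul_le_mul_iff_left hYne0 hYfin).1 hchain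
  refine ⟨hfirst, ?_⟩
  -- part 2 : reflection symmetry
  set F : EuclideanSpace ℝ (Fin n) → EuclideanSpace ℝ (Fin n) :=
    fun x => WithLp.toLp 2 (fun i => if i = i₀ then -x i else x i) with hFdef
  have hFap : ∀ (x : EuclideanSpace ℝ (Fin n)) i, F x i = if i = i₀ then -x i else x i :=
    fun _ _ => rfl
  have hFF : ∀ x, F (F x) = x := by
    intro x; ext i
    simp only [hFap]
    by_cases hi : i = i₀ <;> simp [hi]
  have hFinv : Function.Involutive F := hFF
  have hFmp : MeasurePreserving F volume volume := by
    have h1 : MeasurePreserving (fun (x : Fin n → ℝ) i => if i = i₀ then -x i else x i)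
        volume volume := by
      have h2 := measurePreserving_pi (fun _ : Fin n => (volume : Measure ℝ))
        (fun _ => volume) (f := fun i (t : ℝ) => if i = i₀ then -t else t) (fun i => ?_)
      · rw [show ((volume : Measure (Fin n → ℝ))) = Measure.pi fun _ => volume from
          MeasureTheory.volume_pi]
        exact h2
      · by_cases hi : i = i₀
        · simpa [hi] using Measure.measurePreserving_neg (volume : Measure ℝ)
        · simp only [hi, if_false]; exact MeasurePreserving.id (volume : Measure ℝ)
    have h3 : F = (MeasurableEquiv.toLp 2 (Fin n → ℝ)) ∘
        (fun (x : Fin n → ℝ) i => if i = i₀ then -x i else x i) ∘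
        (MeasurableEquiv.toLp 2 (Fin n → ℝ)).symm := rfl
    rw [h3]
    exact ((EuclideanSpace.volume_preserving_symm_measurableEquiv_toLp (Fin n)).symm).comp
      (h1.comp (EuclideanSpace.volume_preserving_symm_measurableEquiv_toLp (Fin n)))
  have hFlin : IsLinearMap ℝ F := by
    constructor
    · intro x y; ext i
      simp only [hFap, PiLp.add_apply]
      by_cases hi : i = i₀ <;> simp [hi] <;> ring
    · intro r x; ext i
      simp only [hFap, PiLp.smul_apply, smul_eq_mul]
      by_cases hi : i = i₀ <;> simp [hi] <;> ring
  have hFE : F '' E = E := by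
    have : ∀ x ∈ E, F x = x := by
      intro x hx
      have hx0 : x i₀ = 0 := (hE hx).1
      ext i
      simp only [hFap]
      by_cases hi : i = i₀
      · subst hi; simp [hx0]
      · simp [hi]
    rw [Set.image_congr this, Set.image_id']
  have hFnorm : ∀ x, ‖F x‖ = ‖x‖ := by
    intro x
    rw [EuclideanSpace.norm_eq, EuclideanSpace.norm_eq]
    congr 1
    refine Finset.sum_congr rfl fun i _ => ?_
    simp only [hFap]
    by_cases hi : i = i₀ <;> simp [hi]
  have hFball : F '' Metric.ball (0 : EuclideanSpace ℝ (Fin n)) ρ =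
      Metric.ball (0 : EuclideanSpace ℝ (Fin n)) ρ := by
    apply Set.Subset.antisymm
    · rintro _ ⟨x, hx, rfl⟩
      rw [Metric.mem_ball, dist_zero_right] at hx ⊢
      rw [hFnorm]; exact hx
    · intro x hx
      refine ⟨F x, ?_, hFF x⟩
      rw [Metric.mem_ball, dist_zero_right] at hx ⊢
      rw [hFnorm]; exact hx
  have himg : ∀ s : Set (EuclideanSpace ℝ (Fin n)), F ⁻¹' s = F '' s := by
    intro s; ext x
    constructor
    · intro hx; exact ⟨F x, hx, hFF x⟩
    · rintro ⟨y, hy, rfl⟩; rw [Set.mem_preimage, hFF]; exact hy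
  have hFK : F ⁻¹' K = K := by
    rw [himg, hKdef, hFlin.image_convexHull, Set.image_union, hFE, hFball]
  have hFH : F ⁻¹' {x : EuclideanSpace ℝ (Fin n) | 0 < x i₀} =
      {x : EuclideanSpace ℝ (Fin n) | x i₀ < 0} := by
    ext x
    simp only [Set.mem_preimage, Set.mem_setOf_eq]
    have : F x i₀ = -x i₀ := by simp [hFdef]
    rw [this, neg_pos]
  -- convexity / measurability
  have hlin₀ : IsLinearMap ℝ (fun x : EuclideanSpace ℝ (Fin n) => x i₀) :=
    ⟨fun x y => rfl, fun r x => rfl⟩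
  have hKconv : Convex ℝ K := convex_convexHull ℝ _
  have hKHnull : NullMeasurableSet (K ∩ {x : EuclideanSpace ℝ (Fin n) | 0 < x i₀}) volume :=
    (hKconv.inter (convex_halfSpace_gt hlin₀ 0)).nullMeasurableSet volume
  have hsymmvol : volume (K ∩ {x : EuclideanSpace ℝ (Fin n) | x i₀ < 0}) =
      volume (K ∩ {x : EuclideanSpace ℝ (Fin n) | 0 < x i₀}) := by
    have hpre : F ⁻¹' (K ∩ {x : EuclideanSpace ℝ (Fin n) | 0 < x i₀}) =
        K ∩ {x : EuclideanSpace ℝ (Fin n) | x i₀ < 0} := by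
      rw [Set.preimage_inter, hFK, hFH]
    rw [← hpre, hFmp.measure_preimage hKHnull]
  have hzero : volume (K ∩ {x : EuclideanSpace ℝ (Fin n) | x i₀ = 0}) = 0 := by
    set lm : EuclideanSpace ℝ (Fin n) →ₗ[ℝ] ℝ := hlin₀.mk' _ with hlmdef
    have hWne : LinearMap.ker lm ≠ ⊤ := by
      intro htop
      have h1 : EuclideanSpace.single i₀ (1 : ℝ) ∈ LinearMap.ker lm := by
        rw [htop]; trivial
      rw [LinearMap.mem_ker] at h1
      have h2 : lm (EuclideanSpace.single i₀ (1 : ℝ)) = 1 := by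
        show (EuclideanSpace.single i₀ (1 : ℝ)) i₀ = 1
        simp [EuclideanSpace.single_apply]
      rw [h2] at h1
      exact one_ne_zero h1
    have hWvol : volume ((LinearMap.ker lm : Submodule ℝ (EuclideanSpace ℝ (Fin n))) :
        Set (EuclideanSpace ℝ (Fin n))) = 0 :=
      Measure.addHaar_submodule volume _ hWne
    refine measure_mono_null ?_ hWvol
    intro x hx
    exact hx.2
  have hcover : K ⊆ (K ∩ {x : EuclideanSpace ℝ (Fin n) | 0 < x i₀}) ∪
      ((K ∩ {x : EuclideanSpace ℝ (Fin n) | x i₀ < 0}) ∪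
        (K ∩ {x : EuclideanSpace ℝ (Fin n) | x i₀ = 0})) := by
    intro x hx
    rcases lt_trichotomy 0 (x i₀) with h1 | h1 | h1
    · exact Or.inl ⟨hx, h1⟩
    · exact Or.inr (Or.inr ⟨hx, h1.symm⟩)
    · exact Or.inr (Or.inl ⟨hx, h1⟩)
  have hKbound : volume K ≤ 2 * volume (K ∩ {x : EuclideanSpace ℝ (Fin n) | 0 < x i₀}) := by
    calc volume K ≤ volume ((K ∩ {x : EuclideanSpace ℝ (Fin n) | 0 < x i₀}) ∪
          ((K ∩ {x : EuclideanSpace ℝ (Fin n) | x i₀ < 0}) ∪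
            (K ∩ {x : EuclideanSpace ℝ (Fin n) | x i₀ = 0}))) := measure_mono hcover
      _ ≤ volume (K ∩ {x : EuclideanSpace ℝ (Fin n) | 0 < x i₀}) +
          (volume (K ∩ {x : EuclideanSpace ℝ (Fin n) | x i₀ < 0}) +
            volume (K ∩ {x : EuclideanSpace ℝ (Fin n) | x i₀ = 0})) :=
        le_trans (measure_union_le _ _) (by
          exact add_le_add_right (measure_union_le _ _) _)
      _ = 2 * volume (K ∩ {x : EuclideanSpace ℝ (Fin n) | 0 < x i₀}) := by
          rw [hsymmvol, hzero, add_zero, two_mul]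
  -- conclude
  have hofhalf : ENNReal.ofReal (C / 2 * m * h ^ (n - k)) =
      ENNReal.ofReal (1 / 2 : ℝ) * ENNReal.ofReal (C * m * h ^ (n - k)) := by
    rw [← ENNReal.ofReal_mul (by norm_num)]
    congr 1; ring
  have hhalfone : ENNReal.ofReal (1 / 2 : ℝ) * 2 = 1 := by
    rw [show (1 / 2 : ℝ) = 2⁻¹ by norm_num, ENNReal.ofReal_inv_of_pos (by norm_num),
      ENNReal.ofReal_ofNat]
    exact ENNReal.inv_mul_cancel (by norm_num) (by norm_num)
  calc ENNReal.ofReal (C / 2 * m * h ^ (n - k))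
      = ENNReal.ofReal (1 / 2 : ℝ) * ENNReal.ofReal (C * m * h ^ (n - k)) := hofhalf
    _ ≤ ENNReal.ofReal (1 / 2 : ℝ) * volume K := mul_le_mul_right hfirst _
    _ ≤ ENNReal.ofReal (1 / 2 : ℝ) *
        (2 * volume (K ∩ {x : EuclideanSpace ℝ (Fin n) | 0 < x i₀})) :=
        mul_le_mul_right hKbound _
    _ = (ENNReal.ofReal (1 / 2 : ℝ) * 2) *
        volume (K ∩ {x : EuclideanSpace ℝ (Fin n) | 0 < x i₀}) := by rw [mul_assoc]
    _ = volume (K ∩ {x : EuclideanSpace ℝ (Fin n) | 0 < x i₀}) := by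
        rw [hhalfone, one_mul]
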